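/- Quantum mutual information of a bipartite state is 1-smooth relative to negative von Neumann entropy: for density matrices ρ, σ on H_B ⊗ H_R with full support, ⟨∇I_q(ρ) − ∇I_q(σ), ρ − σ⟩ ≤ S(ρ‖σ) + S(σ‖ρ), where I_q(ρ) = S(ρ_R) + S(ρ_B) − S(ρ) with ρ_B = tr_R(ρ), ρ_R = tr_B(ρ) fixed, and ∇I_q(ρ) = log ρ − log(ρ_B) ⊗ I_R. -/

import Mathlib

open scoped BigOperators Kronecker Matrix ComplexOrder

/-- Matrix logarithm of a Hermitian matrix, via the spectral decomposition
(junk value `0` on non-Hermitian input). -/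
noncomputable def matLog {d : Type*} [Fintype d] [DecidableEq d]
    (A : Matrix d d ℂ) : Matrix d d ℂ :=
  if h : A.IsHermitian then
    (h.eigenvectorUnitary : Matrix d d ℂ) *
      Matrix.diagonal (fun i => (Real.log (h.eigenvalues i) : ℂ)) *
      star (h.eigenvectorUnitary : Matrix d d ℂ)
  else 0

/-- Partial trace over the second (reference) factor. -/
noncomputable def ptraceR {nB nR : ℕ}
    (ρ : Matrix (Fin nB × Fin nR) (Fin nB × Fin nR) ℂ) : Matrix (Fin nB) (Fin nB) ℂ :=
  Matrix.of fun b b' => ∑ r, ρ (b, r) (b', r)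

/-- Quantum relative entropy `S(ρ‖σ) = tr[ρ(log ρ − log σ)]` (real part). -/
noncomputable def relEnt {d : Type*} [Fintype d] [DecidableEq d]
    (ρ σ : Matrix d d ℂ) : ℝ :=
  (Matrix.trace (ρ * (matLog ρ - matLog σ))).re

/-- Gradient of quantum mutual information `I_q` at a full-rank bipartite state:
`∇I_q(ρ) = log ρ − (log ρ_B) ⊗ I_R`. -/
noncomputable def gradIq {nB nR : ℕ}
    (ρ : Matrix (Fin nB × Fin nR) (Fin nB × Fin nR) ℂ) :
    Matrix (Fin nB × Fin nR) (Fin nB × Fin nR) ℂ :=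
  matLog ρ - (matLog (ptraceR ρ)) ⊗ₖ (1 : Matrix (Fin nR) (Fin nR) ℂ)

section helpers
open Matrix Finset

lemma sum_swap4 {M : Type*} [AddCommMonoid M] {α β γ δ : Type*}
    [Fintype α] [Fintype β] [Fintype γ] [Fintype δ] (f : α → β → γ → δ → M) :
    ∑ a, ∑ b, ∑ c, ∑ e, f a b c e = ∑ c, ∑ e, ∑ a, ∑ b, f a b c e := by
  rw [show (∑ a, ∑ b, ∑ c, ∑ e, f a b c e) = ∑ a, ∑ c, ∑ b, ∑ e, f a b c e from
    Finset.sum_congr rfl fun _ _ => Finset.sum_comm]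
  rw [Finset.sum_comm]
  exact Finset.sum_congr rfl fun c _ => by
    rw [show (∑ a, ∑ b, ∑ e, f a b c e) = ∑ a, ∑ e, ∑ b, f a b c e from
      Finset.sum_congr rfl fun _ _ => Finset.sum_comm]
    exact Finset.sum_comm

lemma trace_sandwich {d : Type*} [Fintype d] [DecidableEq d]
    (U V : Matrix d d ℂ) (a b : d → ℝ) :
    Matrix.trace ((U * Matrix.diagonal (fun i => (a i : ℂ)) * star U) *
      (V * Matrix.diagonal (fun j => (b j : ℂ)) * star V)) =
    ((∑ i, ∑ j, Complex.normSq (((star U) * V) i j) * a i * b j : ℝ) : ℂ) := by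
  have hX : ∀ (W : Matrix d d ℂ) (c : d → ℝ) (m n : d),
      (W * Matrix.diagonal (fun i => (c i : ℂ)) * star W) m n
        = ∑ i, W m i * (c i : ℂ) * (starRingEnd ℂ) (W n i) := by
    intro W c m n
    rw [Matrix.mul_apply]
    refine Finset.sum_congr rfl fun i _ => ?_
    rw [Matrix.mul_diagonal]
    rfl
  have hW : ∀ i j, ((star U) * V) i j = ∑ m, (starRingEnd ℂ) (U m i) * V m j := by
    intro i j; rw [Matrix.mul_apply]; rfl
  push_cast
  rw [Matrix.trace]
  simp only [Matrix.diag_apply, Matrix.mul_apply (M := (U * Matrix.diagonal _ * star U)), hX, hW,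
    Complex.normSq_eq_conj_mul_self, map_sum, _root_.map_mul, Complex.conj_conj]
  simp only [Finset.sum_mul, Finset.mul_sum]
  rw [sum_swap4 (f := fun m n j i => U m i * (a i:ℂ) * (starRingEnd ℂ) (U n i) *
      (V n j * (b j:ℂ) * (starRingEnd ℂ) (V m j)))]
  rw [Finset.sum_comm]
  refine Finset.sum_congr rfl fun i _ => ?_
  refine Finset.sum_congr rfl fun j _ => ?_
  rw [Finset.sum_comm]
  refine Finset.sum_congr rfl fun n _ => ?_
  refine Finset.sum_congr rfl fun m _ => ?_
  ring

lemma row_sum_normSq {d : Type*} [Fintype d] [DecidableEq d]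
    {W : Matrix d d ℂ} (hW : W ∈ Matrix.unitaryGroup d ℂ) (i : d) :
    ∑ j, Complex.normSq (W i j) = 1 := by
  have h1 : (W * star W) i i = 1 := by
    rw [(Matrix.mem_unitaryGroup_iff).mp hW]; simp [Matrix.one_apply]
  rw [Matrix.mul_apply] at h1
  have : ∑ j, ((Complex.normSq (W i j) : ℂ)) = 1 := by
    rw [← h1]; exact Finset.sum_congr rfl fun j _ => (Complex.mul_conj (W i j)).symm
  exact_mod_cast this

lemma col_sum_normSq {d : Type*} [Fintype d] [DecidableEq d]
    {W : Matrix d d ℂ} (hW : W ∈ Matrix.unitaryGroup d ℂ) (j : d) :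
    ∑ i, Complex.normSq (W i j) = 1 := by
  have h1 : (star W * W) j j = 1 := by
    rw [(Matrix.mem_unitaryGroup_iff').mp hW]; simp [Matrix.one_apply]
  rw [Matrix.mul_apply] at h1
  have : ∑ i, ((Complex.normSq (W i j) : ℂ)) = 1 := by
    rw [← h1]
    refine Finset.sum_congr rfl fun i _ => ?_
    have h2 : (star W) j i * W i j = W i j * (starRingEnd ℂ) (W i j) := by
      simp [Matrix.star_apply]; ring
    rw [h2, Complex.mul_conj]
  exact_mod_cast this

lemma klein {d : Type*} [Fintype d] [DecidableEq d] {A B : Matrix d d ℂ}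
    (hA : A.PosDef) (hB : B.PosDef) :
    0 ≤ (Matrix.trace ((A - B) * (matLog A - matLog B))).re := by
  have hAh := hA.isHermitian
  have hBh := hB.isHermitian
  set U : Matrix d d ℂ := (hAh.eigenvectorUnitary : Matrix d d ℂ) with hUdef
  set V : Matrix d d ℂ := (hBh.eigenvectorUnitary : Matrix d d ℂ) with hVdef
  set p := hAh.eigenvalues with hpdef
  set q := hBh.eigenvalues with hqdef
  have hUmem : U ∈ Matrix.unitaryGroup d ℂ := (hAh.eigenvectorUnitary).2
  have hVmem : V ∈ Matrix.unitaryGroup d ℂ := (hBh.eigenvectorUnitary).2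
  have hWmem : star U * V ∈ Matrix.unitaryGroup d ℂ :=
    mul_mem (Unitary.star_mem hUmem) hVmem
  set c : d → d → ℝ := fun i j => Complex.normSq ((star U * V) i j) with hcdef
  have hA' : A = U * Matrix.diagonal (fun i => ((p i : ℝ) : ℂ)) * star U := hAh.spectral_theorem
  have hB' : B = V * Matrix.diagonal (fun i => ((q i : ℝ) : ℂ)) * star V := hBh.spectral_theorem
  have hLA : matLog A = U * Matrix.diagonal (fun i => ((Real.log (p i) : ℝ) : ℂ)) * star U := by
    rw [matLog, dif_pos hAh]
  have hLB : matLog B = V * Matrix.diagonal (fun i => ((Real.log (q i) : ℝ) : ℂ)) * star V := by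
    rw [matLog, dif_pos hBh]
  -- the four traces
  have e1 : Matrix.trace (A * matLog A)
      = ((∑ i, ∑ j, c i j * (p i * Real.log (p i)) : ℝ) : ℂ) := by
    rw [hLA, hA', trace_sandwich]
    norm_cast
    have hUU : ((star U) * U) = 1 := (Matrix.mem_unitaryGroup_iff').mp hUmem
    rw [hUU]
    have : ∀ i : d, (∑ j, Complex.normSq ((1 : Matrix d d ℂ) i j) * p i * Real.log (p j))
        = p i * Real.log (p i) := by
      intro i
      rw [Finset.sum_eq_single i]
      · simp [Matrix.one_apply]
      · intro j _ hj
        simp [Matrix.one_apply, Ne.symm hj]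
      · simp
    rw [Finset.sum_congr rfl fun i _ => this i]
    refine Finset.sum_congr rfl fun i _ => ?_
    rw [← Finset.sum_mul, row_sum_normSq hWmem i, one_mul]
  have e4 : Matrix.trace (B * matLog B)
      = ((∑ i, ∑ j, c i j * (q j * Real.log (q j)) : ℝ) : ℂ) := by
    rw [hLB, hB', trace_sandwich]
    norm_cast
    have hVV : ((star V) * V) = 1 := (Matrix.mem_unitaryGroup_iff').mp hVmem
    rw [hVV]
    have : ∀ j : d, (∑ j', Complex.normSq ((1 : Matrix d d ℂ) j j') * q j * Real.log (q j'))
        = q j * Real.log (q j) := by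
      intro j
      rw [Finset.sum_eq_single j]
      · simp [Matrix.one_apply]
      · intro j' _ hj; simp [Matrix.one_apply, Ne.symm hj]
      · simp
    rw [Finset.sum_congr rfl fun j _ => this j]
    rw [Finset.sum_comm (f := fun i j => c i j * (q j * Real.log (q j)))]
    refine Finset.sum_congr rfl fun j _ => ?_
    rw [← Finset.sum_mul, col_sum_normSq hWmem j, one_mul]
  have e2 : Matrix.trace (A * matLog B)
      = ((∑ i, ∑ j, c i j * (p i * Real.log (q j)) : ℝ) : ℂ) := by
    rw [hLB, hA', trace_sandwich]
    norm_cast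
    refine Finset.sum_congr rfl fun i _ => Finset.sum_congr rfl fun j _ => ?_
    ring
  have e3 : Matrix.trace (B * matLog A)
      = ((∑ i, ∑ j, c i j * (q j * Real.log (p i)) : ℝ) : ℂ) := by
    rw [hLA, hB', trace_sandwich]
    norm_cast
    have hsv : ∀ i j, Complex.normSq ((star V * U) i j) = c j i := by
      intro i j
      have : (star V * U) = star ((star U) * V) := by
        rw [StarMul.star_mul]; simp
      rw [this, Matrix.star_apply, Complex.star_def, Complex.normSq_conj]
    rw [Finset.sum_congr rfl fun i (_ : i ∈ Finset.univ) =>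
      Finset.sum_congr rfl fun j (_ : j ∈ Finset.univ) => by rw [hsv i j]]
    rw [Finset.sum_comm]
    refine Finset.sum_congr rfl fun i _ => Finset.sum_congr rfl fun j _ => ?_
    ring
  have etr : Matrix.trace ((A - B) * (matLog A - matLog B))
      = Matrix.trace (A * matLog A) - Matrix.trace (A * matLog B)
        - Matrix.trace (B * matLog A) + Matrix.trace (B * matLog B) := by
    rw [sub_mul, mul_sub, mul_sub, Matrix.trace_sub, Matrix.trace_sub, Matrix.trace_sub]
    ring
  rw [etr, e1, e2, e3, e4]
  rw [← Complex.ofReal_sub, ← Complex.ofReal_sub, ← Complex.ofReal_add, Complex.ofReal_re]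
  have hcomb : (∑ i, ∑ j, c i j * (p i * Real.log (p i))) - (∑ i, ∑ j, c i j * (p i * Real.log (q j)))
      - (∑ i, ∑ j, c i j * (q j * Real.log (p i))) + (∑ i, ∑ j, c i j * (q j * Real.log (q j)))
      = ∑ i, ∑ j, c i j * ((p i - q j) * (Real.log (p i) - Real.log (q j))) := by
    simp only [← Finset.sum_sub_distrib, ← Finset.sum_add_distrib]
    refine Finset.sum_congr rfl fun i _ => Finset.sum_congr rfl fun j _ => ?_
    ring
  rw [hcomb]
  refine Finset.sum_nonneg fun i _ => Finset.sum_nonneg fun j _ => ?_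
  refine mul_nonneg (Complex.normSq_nonneg _) ?_
  have hp : 0 < p i := hA.eigenvalues_pos i
  have hq : 0 < q j := hB.eigenvalues_pos j
  rcases le_total (q j) (p i) with h | h
  · exact mul_nonneg (by linarith) (by
      have := (Real.log_le_log_iff hq hp).2 h; linarith)
  · have h1 : q j - p i ≥ 0 := by linarith
    have h2 : Real.log (q j) - Real.log (p i) ≥ 0 := by
      have := (Real.log_le_log_iff hp hq).2 h; linarith
    nlinarith

lemma ptraceR_sub {nB nR : ℕ}
    (ρ σ : Matrix (Fin nB × Fin nR) (Fin nB × Fin nR) ℂ) :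
    ptraceR (ρ - σ) = ptraceR ρ - ptraceR σ := by
  ext b b'
  simp [ptraceR, Finset.sum_sub_distrib]

lemma trace_kron_ptrace {nB nR : ℕ} (M : Matrix (Fin nB) (Fin nB) ℂ)
    (X : Matrix (Fin nB × Fin nR) (Fin nB × Fin nR) ℂ) :
    Matrix.trace ((M ⊗ₖ (1 : Matrix (Fin nR) (Fin nR) ℂ)) * X)
      = Matrix.trace (M * ptraceR X) := by
  simp only [Matrix.trace, Matrix.diag_apply, Matrix.mul_apply, ptraceR, Matrix.of_apply,
    Matrix.kroneckerMap_apply, Matrix.one_apply, Fintype.sum_prod_type, mul_ite, mul_one,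
    mul_zero, ite_mul, zero_mul, Finset.sum_ite_eq, Finset.mem_univ, if_true,
    Finset.mul_sum]
  exact Finset.sum_congr rfl fun b _ => Finset.sum_comm

lemma ptraceR_posDef {nB nR : ℕ} [NeZero nR]
    {ρ : Matrix (Fin nB × Fin nR) (Fin nB × Fin nR) ℂ} (hρ : ρ.PosDef) :
    (ptraceR ρ).PosDef := by
  rw [Matrix.posDef_iff_dotProduct_mulVec]
  constructor
  · ext b b'
    simp only [Matrix.conjTranspose_apply, ptraceR, Matrix.of_apply, Matrix.star_apply,
      star_sum]
    calc ∑ r, star (ρ (b', r) (b, r)) = ∑ r, ρ (b, r) (b', r) := by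
          refine Finset.sum_congr rfl fun r _ => ?_
          have := congrFun (congrFun hρ.isHermitian (b, r)) (b', r)
          simpa [Matrix.conjTranspose_apply] using this
      _ = _ := rfl
  · intro x hx
    set y : Fin nR → (Fin nB × Fin nR → ℂ) := fun r => fun bp => if bp.2 = r then x bp.1 else 0
      with hy
    have hsum : dotProduct (star x) ((ptraceR ρ).mulVec x)
        = ∑ r, dotProduct (star (y r)) (ρ.mulVec (y r)) := by
      simp only [dotProduct, Matrix.mulVec, dotProduct, ptraceR, Matrix.of_apply, hy,
        Pi.star_apply, Fintype.sum_prod_type, apply_ite (star : ℂ → ℂ), star_zero, ite_mul, zero_mul,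
        mul_ite, mul_zero, Finset.sum_ite_eq', Finset.mem_univ, if_true, Finset.sum_mul,
        Finset.mul_sum]
      trans (∑ r : Fin nR, ∑ b : Fin nB, ∑ b' : Fin nB, star (x b) * (ρ (b, r) (b', r) * x b'))
      · rw [show (∑ b : Fin nB, ∑ b' : Fin nB, ∑ r : Fin nR,
            star (x b) * (ρ (b, r) (b', r) * x b'))
            = ∑ b : Fin nB, ∑ r : Fin nR, ∑ b' : Fin nB,
            star (x b) * (ρ (b, r) (b', r) * x b') from
          Finset.sum_congr rfl fun _ _ => Finset.sum_comm, Finset.sum_comm]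
      · refine Finset.sum_congr rfl fun r _ => Finset.sum_congr rfl fun b _ => ?_
        symm
        rw [Finset.sum_comm]
        simp [Finset.sum_ite_eq']
    rw [hsum]
    have hynz : ∀ r, y r ≠ 0 := by
      intro r hyr
      apply hx
      funext b
      have := congrFun hyr (b, r)
      simpa [hy] using this
    exact Finset.sum_pos (fun r _ => hρ.dotProduct_mulVec_pos (hynz r)) Finset.univ_nonempty

lemma sub_kron_one {nB nR : ℕ} (A B : Matrix (Fin nB) (Fin nB) ℂ) :
    ((A - B) ⊗ₖ (1 : Matrix (Fin nR) (Fin nR) ℂ))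
      = A ⊗ₖ (1 : Matrix (Fin nR) (Fin nR) ℂ) - B ⊗ₖ (1 : Matrix (Fin nR) (Fin nR) ℂ) := by
  ext ⟨b, r⟩ ⟨b', r'⟩
  simp [Matrix.kroneckerMap_apply, Matrix.sub_apply, sub_mul]


end helpers

/-- Quantum mutual information of a bipartite state is `1`-smooth relative to negative
von Neumann entropy: for full-rank density matrices `ρ, σ` on `H_B ⊗ H_R`,
`⟨∇I_q(ρ) − ∇I_q(σ), ρ − σ⟩ ≤ S(ρ‖σ) + S(σ‖ρ)`. -/
theorem stmt_6 {nB nR : ℕ}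
    (ρ σ : Matrix (Fin nB × Fin nR) (Fin nB × Fin nR) ℂ)
    (hρ : ρ.PosDef) (hσ : σ.PosDef)
    (hρtr : ρ.trace = 1) (hσtr : σ.trace = 1) :
    (Matrix.trace ((gradIq ρ - gradIq σ) * (ρ - σ))).re ≤ relEnt ρ σ + relEnt σ ρ := by
  have hnR : NeZero nR := by
    constructor
    intro h
    subst h
    have h0 : ρ.trace = 0 := by simp [Matrix.trace]
    rw [hρtr] at h0
    exact one_ne_zero h0
  have hρB : (ptraceR ρ).PosDef := ptraceR_posDef hρ
  have hσB : (ptraceR σ).PosDef := ptraceR_posDef hσ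
  -- split the LHS trace
  have hsplit : Matrix.trace ((gradIq ρ - gradIq σ) * (ρ - σ))
      = Matrix.trace ((matLog ρ - matLog σ) * (ρ - σ))
        - Matrix.trace ((matLog (ptraceR ρ) - matLog (ptraceR σ)) * (ptraceR ρ - ptraceR σ)) := by
    have hg : gradIq ρ - gradIq σ
        = (matLog ρ - matLog σ)
          - (matLog (ptraceR ρ) - matLog (ptraceR σ)) ⊗ₖ (1 : Matrix (Fin nR) (Fin nR) ℂ) := by
      rw [gradIq, gradIq, sub_kron_one]
      abel
    rw [hg, sub_mul, Matrix.trace_sub, trace_kron_ptrace, ptraceR_sub]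
  -- rewrite the RHS
  have hRHS : relEnt ρ σ + relEnt σ ρ = (Matrix.trace ((matLog ρ - matLog σ) * (ρ - σ))).re := by
    have h1 : Matrix.trace ((matLog ρ - matLog σ) * (ρ - σ))
        = Matrix.trace (ρ * (matLog ρ - matLog σ)) + Matrix.trace (σ * (matLog σ - matLog ρ)) := by
      rw [Matrix.trace_mul_comm]
      simp only [sub_mul, mul_sub, Matrix.trace_sub]
      ring
    rw [relEnt, relEnt, h1, Complex.add_re]
  rw [hsplit, Complex.sub_re, hRHS]
  have hK : 0 ≤ (Matrix.trace ((matLog (ptraceR ρ) - matLog (ptraceR σ))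
      * (ptraceR ρ - ptraceR σ))).re := by
    rw [Matrix.trace_mul_comm]
    exact klein hρB hσB
  linarith
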